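/- arXiv:2603.20922 — 8 statements merged into one kernel-verified Lean document; each statement's English description precedes it below -/
import Mathlib

section
/- Let B be a ball of X and let B' be a nonempty ball with B' ⊊ B such that d(x,y) = diam(B) for every x ∈ B' and every y ∈ B \ B'. Define φ : X → ℝ by φ = 1_{B'}/m(B') − 1_B/m(B), and fix x₀ ∈ B'. Then φ ≠ 0 and the ultrametric Laplacian satisfies L φ = λ · φ, where λ = −(Σ_{y ∉ B} k(d(x₀,y))·m(y) + k(diam B)·m(B)). -/
open scoped Classical
open Finset

/-- Closed ball of radius `r` around `x`, as a finset. -/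
noncomputable def uball {X : Type*} [Fintype X] (d : X → X → ℝ) (x : X) (r : ℝ) : Finset X :=
  Finset.univ.filter fun y => d x y ≤ r

/-- A ball of the ultrametric space: a closed ball of nonnegative radius. -/
def IsBall {X : Type*} [Fintype X] (d : X → X → ℝ) (B : Finset X) : Prop :=
  ∃ x r, 0 ≤ r ∧ B = uball d x r

/-- Diameter of a finite set: maximum of `d` over `B × B` (`0` if `B` is empty). -/
noncomputable def fdiam {X : Type*} [Fintype X] (d : X → X → ℝ) (B : Finset X) : ℝ :=
  if h : (B ×ˢ B).Nonempty then (B ×ˢ B).sup' h fun p => d p.1 p.2 else 0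

/-- Mass of a set: `m(B) = Σ_{x ∈ B} m(x)`. -/
noncomputable def mass {X : Type*} [Fintype X] (m : X → ℝ) (B : Finset X) : ℝ :=
  ∑ x ∈ B, m x

/-- The eigenvalue attached to a ball `B`, computed from a base point `x₀ ∈ B`:
`λ(B) = −(Σ_{y ∉ B} k(d(x₀,y))·m(y) + k(diam B)·m(B))`. -/
noncomputable def lamB {X : Type*} [Fintype X] [DecidableEq X]
    (d : X → X → ℝ) (k : ℝ → ℝ) (m : X → ℝ) (B : Finset X) (x₀ : X) : ℝ :=
  -((∑ y ∈ Bᶜ, k (d x₀ y) * m y) + k (fdiam d B) * mass m B)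

/-- The parent radius of a ball `B ⊊ X` seen from `x ∈ B`: `r⁺ = min{d(x,y) : y ∉ B}`. -/
noncomputable def parentR {X : Type*} [Fintype X] [DecidableEq X]
    (d : X → X → ℝ) (B : Finset X) (x : X) : ℝ :=
  if h : (Bᶜ : Finset X).Nonempty then Bᶜ.inf' h fun y => d x y else 0

/-- The parent ball `B⁺ = B(x, r⁺)` of `B ⊊ X`, computed from a base point `x ∈ B`. -/
noncomputable def parentB {X : Type*} [Fintype X] [DecidableEq X]
    (d : X → X → ℝ) (B : Finset X) (x : X) : Finset X :=
  uball d x (parentR d B x)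

/-- The ultrametric Laplacian matrix:
`L x y = k(d(x,y))·m(y)` off the diagonal and `L x x = −Σ_{z ≠ x} k(d(x,z))·m(z)`. -/
noncomputable def ultraLap {X : Type*} [Fintype X] [DecidableEq X]
    (d : X → X → ℝ) (k : ℝ → ℝ) (m : X → ℝ) : Matrix X X ℝ :=
  fun x y => if y = x then -(∑ z ∈ ({x}ᶜ : Finset X), k (d x z) * m z) else k (d x y) * m y

/-- The smallest ball containing `x` and `y` and having at least two elements:
`B(x, d(x,y))` for `x ≠ y`, and `B(x, min_{z ≠ x} d(x,z))` for `x = y`. -/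
noncomputable def sball {X : Type*} [Fintype X] [DecidableEq X]
    (d : X → X → ℝ) (x y : X) : Finset X :=
  if x = y then
    (if h : (({x}ᶜ : Finset X)).Nonempty then
      uball d x ((({x}ᶜ : Finset X)).inf' h fun z => d x z)
     else uball d x 0)
  else uball d x (d x y)


lemma uball_out_const {X : Type*} [Fintype X]
    (d : X → X → ℝ) (hsymm : ∀ x y, d x y = d y x)
    (hultra : ∀ x y z, d x z ≤ max (d x y) (d y z))
    (c : X) (r : ℝ) {x y : X} (hx : x ∈ uball d c r) (hy : y ∉ uball d c r) :
    d x y = d c y := by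
  simp only [uball, Finset.mem_filter, Finset.mem_univ, true_and] at hx hy
  push_neg at hy
  have h1 : d x y ≤ d c y := by
    refine (hultra x c y).trans (max_le ?_ le_rfl)
    rw [hsymm x c]; linarith
  have h2 : d c y ≤ d x y := by
    rcases le_max_iff.mp (hultra c x y) with h | h
    · linarith
    · exact h
  linarith

/-- If `B' ⊊ B` are balls with `d(x,y) = diam B` for all `x ∈ B'`,
`y ∈ B \ B'`, then `φ = 1_{B'}/m(B') − 1_B/m(B)` is a nonzero eigenfunction of the
ultrametric Laplacian with eigenvalue
`λ = −(Σ_{y ∉ B} k(d(x₀,y))·m(y) + k(diam B)·m(B))`, for `x₀ ∈ B'`. -/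
theorem stmt0 {X : Type*} [Fintype X] [DecidableEq X]
    (hX : 1 < Fintype.card X)
    (d : X → X → ℝ)
    (hd0 : ∀ x y, d x y = 0 ↔ x = y)
    (hsymm : ∀ x y, d x y = d y x)
    (hultra : ∀ x y z, d x z ≤ max (d x y) (d y z))
    (m : X → ℝ) (hm : ∀ x, 0 < m x) (k : ℝ → ℝ)
    (B B' : Finset X) (hB : IsBall d B) (hB' : IsBall d B')
    (hne : B'.Nonempty) (hss : B' ⊂ B)
    (hconst : ∀ x ∈ B', ∀ y ∈ B \ B', d x y = fdiam d B)
    (x₀ : X) (hx₀ : x₀ ∈ B') :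
    let φ : X → ℝ := fun x =>
      (if x ∈ B' then (mass m B')⁻¹ else 0) - (if x ∈ B then (mass m B)⁻¹ else 0)
    φ ≠ 0 ∧
      ∀ x, (∑ y, k (d x y) * (φ y - φ x) * m y) = lamB d k m B x₀ * φ x := by
  intro φ
  have hsub := hss.subset
  have hMpos : 0 < mass m B := Finset.sum_pos (fun i _ => hm i) (hne.mono hsub)
  have hM'pos : 0 < mass m B' := Finset.sum_pos (fun i _ => hm i) hne
  have hMne : mass m B ≠ 0 := ne_of_gt hMpos
  have hM'ne : mass m B' ≠ 0 := ne_of_gt hM'pos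
  obtain ⟨c, r, hr, hBe⟩ := hB
  have hout : ∀ a ∈ B, ∀ z ∉ B, d a z = d x₀ z := by
    intro a ha z hz
    have h1 : d a z = d c z := by
      rw [hBe] at ha hz; exact uball_out_const d hsymm hultra c r ha hz
    have h2 : d x₀ z = d c z := by
      have hx0B : x₀ ∈ B := hsub hx₀
      rw [hBe] at hx0B hz; exact uball_out_const d hsymm hultra c r hx0B hz
    rw [h1, h2]
  have hmassd : ∑ y ∈ B \ B', m y = mass m B - mass m B' := by
    have := Finset.sum_sdiff (f := m) hsub
    simp only [mass]; linarith
  have hφ0 : ∀ y, y ∉ B → φ y = 0 := by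
    intro y hyB
    have hyB' : y ∉ B' := fun h => hyB (hsub h)
    simp [φ, hyB, hyB']
  constructor
  · obtain ⟨y, hyB, hyB'⟩ := Finset.exists_of_ssubset hss
    intro h0
    have hy := congrFun h0 y
    simp only [φ, hyB, hyB', if_true, if_false, Pi.zero_apply] at hy
    have : (mass m B)⁻¹ = 0 := by linarith
    exact hMne (inv_eq_zero.mp this)
  · intro x
    have hsum : ∀ f : X → ℝ,
        ∑ y, f y = (∑ y ∈ B', f y) + (∑ y ∈ B \ B', f y) + (∑ y ∈ Bᶜ, f y) := by
      intro f
      rw [← Finset.sum_add_sum_compl B f, ← Finset.sum_sdiff (f := f) hsub]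
      ring
    rw [hsum]
    by_cases hx1 : x ∈ B'
    · have hxB : x ∈ B := hsub hx1
      have hφx : φ x = (mass m B')⁻¹ - (mass m B)⁻¹ := by simp [φ, hx1, hxB]
      have e1 : (∑ y ∈ B', k (d x y) * (φ y - φ x) * m y) = 0 := by
        apply Finset.sum_eq_zero
        intro y hy
        have : φ y = φ x := by simp [φ, hy, hsub hy, hx1, hxB]
        rw [this]; ring
      have e2 : (∑ y ∈ B \ B', k (d x y) * (φ y - φ x) * m y)
          = k (fdiam d B) * (-(mass m B')⁻¹) * (mass m B - mass m B') :=
        calc (∑ y ∈ B \ B', k (d x y) * (φ y - φ x) * m y)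
            = ∑ y ∈ B \ B', (k (fdiam d B) * (-(mass m B')⁻¹)) * m y := by
              refine Finset.sum_congr rfl fun y hy => ?_
              obtain ⟨hyB, hyB'⟩ := Finset.mem_sdiff.mp hy
              rw [hconst x hx1 y hy, hφx]
              simp only [φ, hyB, hyB', if_true, if_false]
              ring
          _ = _ := by rw [← Finset.mul_sum, hmassd]
      have e3 : (∑ y ∈ Bᶜ, k (d x y) * (φ y - φ x) * m y)
          = -(φ x) * ∑ y ∈ Bᶜ, k (d x₀ y) * m y := by
        rw [Finset.mul_sum]
        refine Finset.sum_congr rfl fun y hy => ?_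
        have hyB := Finset.mem_compl.mp hy
        rw [hout x hxB y hyB, hφ0 y hyB]; ring
      rw [e1, e2, e3, hφx, lamB]
      field_simp
      ring
    · by_cases hx2 : x ∈ B
      · have hφx : φ x = -(mass m B)⁻¹ := by simp [φ, hx1, hx2]
        have hxsd : x ∈ B \ B' := Finset.mem_sdiff.mpr ⟨hx2, hx1⟩
        have e1 : (∑ y ∈ B', k (d x y) * (φ y - φ x) * m y)
            = k (fdiam d B) * (mass m B')⁻¹ * mass m B' :=
          calc (∑ y ∈ B', k (d x y) * (φ y - φ x) * m y)
              = ∑ y ∈ B', (k (fdiam d B) * (mass m B')⁻¹) * m y := by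
                refine Finset.sum_congr rfl fun y hy => ?_
                have hd : d x y = fdiam d B := by
                  rw [hsymm x y]; exact hconst y hy x hxsd
                rw [hd, hφx]
                simp only [φ, hy, hsub hy, if_true]
                ring
            _ = _ := by rw [← Finset.mul_sum]; rfl
        have e2 : (∑ y ∈ B \ B', k (d x y) * (φ y - φ x) * m y) = 0 := by
          apply Finset.sum_eq_zero
          intro y hy
          obtain ⟨hyB, hyB'⟩ := Finset.mem_sdiff.mp hy
          have : φ y = φ x := by simp [φ, hyB, hyB', hx1, hx2]
          rw [this]; ring
        have e3 : (∑ y ∈ Bᶜ, k (d x y) * (φ y - φ x) * m y)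
            = -(φ x) * ∑ y ∈ Bᶜ, k (d x₀ y) * m y := by
          rw [Finset.mul_sum]
          refine Finset.sum_congr rfl fun y hy => ?_
          have hyB := Finset.mem_compl.mp hy
          rw [hout x hx2 y hyB, hφ0 y hyB]; ring
        rw [e1, e2, e3, hφx, lamB]
        field_simp
        ring
      · have hφx : φ x = 0 := hφ0 x hx2
        have hdc : ∀ y ∈ B, d x y = d x₀ x := by
          intro y hy
          rw [hsymm x y]
          exact hout y hy x hx2
        have e1 : (∑ y ∈ B', k (d x y) * (φ y - φ x) * m y)
            = (k (d x₀ x) * ((mass m B')⁻¹ - (mass m B)⁻¹)) * mass m B' :=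
          calc (∑ y ∈ B', k (d x y) * (φ y - φ x) * m y)
              = ∑ y ∈ B', (k (d x₀ x) * ((mass m B')⁻¹ - (mass m B)⁻¹)) * m y := by
                refine Finset.sum_congr rfl fun y hy => ?_
                rw [hdc y (hsub hy), hφx]
                simp only [φ, hy, hsub hy, if_true]
                ring
            _ = _ := by rw [← Finset.mul_sum]; rfl
        have e2 : (∑ y ∈ B \ B', k (d x y) * (φ y - φ x) * m y)
            = (k (d x₀ x) * (-(mass m B)⁻¹)) * (mass m B - mass m B') :=
          calc (∑ y ∈ B \ B', k (d x y) * (φ y - φ x) * m y)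
              = ∑ y ∈ B \ B', (k (d x₀ x) * (-(mass m B)⁻¹)) * m y := by
                refine Finset.sum_congr rfl fun y hy => ?_
                obtain ⟨hyB, hyB'⟩ := Finset.mem_sdiff.mp hy
                rw [hdc y hyB, hφx]
                simp only [φ, hyB, hyB', if_true, if_false]
                ring
            _ = _ := by rw [← Finset.mul_sum, hmassd]
        have e3 : (∑ y ∈ Bᶜ, k (d x y) * (φ y - φ x) * m y) = 0 := by
          apply Finset.sum_eq_zero
          intro y hy
          rw [hφ0 y (Finset.mem_compl.mp hy), hφx]; ring
        rw [e1, e2, e3, hφx]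
        field_simp
        ring
end

section
/- Assume k is nonincreasing on [0,∞). Let B ⊆ B' be balls of X and let x₀ ∈ B. Then Σ_{y ∉ B} k(d(x₀,y))·m(y) + k(diam B)·m(B) ≥ Σ_{y ∉ B'} k(d(x₀,y))·m(y) + k(diam B')·m(B'); equivalently, the attached eigenvalues satisfy λ(B) ≤ λ(B'). -/
open scoped Classical
open Finset

/-- If `k` is nonincreasing on `[0,∞)` and `B ⊆ B'` are balls with
`x₀ ∈ B`, then the exterior-plus-diagonal sums are monotone and `λ(B) ≤ λ(B')`. -/
theorem stmt2 {X : Type*} [Fintype X] [DecidableEq X]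
    (hX : 1 < Fintype.card X)
    (d : X → X → ℝ)
    (hd0 : ∀ x y, d x y = 0 ↔ x = y)
    (hsymm : ∀ x y, d x y = d y x)
    (hultra : ∀ x y z, d x z ≤ max (d x y) (d y z))
    (m : X → ℝ) (hm : ∀ x, 0 < m x) (k : ℝ → ℝ)
    (hk : ∀ a b, 0 ≤ a → a ≤ b → k b ≤ k a)
    (B B' : Finset X) (hB : IsBall d B) (hB' : IsBall d B')
    (hss : B ⊆ B') (x₀ : X) (hx₀ : x₀ ∈ B) :
    ((∑ y ∈ B'ᶜ, k (d x₀ y) * m y) + k (fdiam d B') * mass m B'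
        ≤ (∑ y ∈ Bᶜ, k (d x₀ y) * m y) + k (fdiam d B) * mass m B) ∧
    lamB d k m B x₀ ≤ lamB d k m B' x₀ := by
  have hdnn : ∀ x y, 0 ≤ d x y := by
    intro x y
    have h := hultra x y x
    rw [(hd0 x x).mpr rfl, hsymm y x] at h
    simp only [max_self] at h
    linarith
  have hx₀' : x₀ ∈ B' := hss hx₀
  have hBne : (B ×ˢ B).Nonempty := ⟨(x₀, x₀), Finset.mk_mem_product hx₀ hx₀⟩
  have hB'ne : (B' ×ˢ B').Nonempty := ⟨(x₀, x₀), Finset.mk_mem_product hx₀' hx₀'⟩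
  have hfB : fdiam d B = (B ×ˢ B).sup' hBne fun p => d p.1 p.2 := by
    rw [fdiam, dif_pos hBne]
  have hfB' : fdiam d B' = (B' ×ˢ B').sup' hB'ne fun p => d p.1 p.2 := by
    rw [fdiam, dif_pos hB'ne]
  have hDnn : 0 ≤ fdiam d B := by
    rw [hfB]
    have := Finset.le_sup' (f := fun p : X × X => d p.1 p.2)
      (Finset.mk_mem_product hx₀ hx₀)
    exact ((hd0 x₀ x₀).mpr rfl).symm.le.trans this
  have hDle : fdiam d B ≤ fdiam d B' := by
    rw [hfB, hfB']
    apply Finset.sup'_le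
    intro p hp
    exact Finset.le_sup' (f := fun p : X × X => d p.1 p.2) (Finset.product_subset_product hss hss hp)
  have hD'nn : 0 ≤ fdiam d B' := le_trans hDnn hDle
  have hdle : ∀ y ∈ B', d x₀ y ≤ fdiam d B' := by
    intro y hy
    rw [hfB']
    exact Finset.le_sup' (f := fun p : X × X => d p.1 p.2) (Finset.mk_mem_product hx₀' hy)
  -- decompose
  have hcss : B'ᶜ ⊆ Bᶜ := Finset.compl_subset_compl.mpr hss
  have hsd : Bᶜ \ B'ᶜ = B' \ B := by
    ext x; simp [Finset.mem_sdiff, Finset.mem_compl, and_comm]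
  have hsum : ∀ f : X → ℝ, ∑ y ∈ Bᶜ, f y = (∑ y ∈ B' \ B, f y) + ∑ y ∈ B'ᶜ, f y := by
    intro f
    rw [← Finset.sum_sdiff hcss, hsd]
  have hmass : mass m B' = (∑ y ∈ B' \ B, m y) + mass m B := by
    unfold mass
    rw [← Finset.sum_sdiff hss]
  have hmBnn : 0 ≤ mass m B :=
    Finset.sum_nonneg fun x _ => (hm x).le
  have key : (∑ y ∈ B'ᶜ, k (d x₀ y) * m y) + k (fdiam d B') * mass m B'
      ≤ (∑ y ∈ Bᶜ, k (d x₀ y) * m y) + k (fdiam d B) * mass m B := by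
    rw [hsum (fun y => k (d x₀ y) * m y), hmass, mul_add]
    have h1 : k (fdiam d B') * ∑ y ∈ B' \ B, m y ≤ ∑ y ∈ B' \ B, k (d x₀ y) * m y := by
      rw [Finset.mul_sum]
      apply Finset.sum_le_sum
      intro y hy
      have hy' : y ∈ B' := (Finset.mem_sdiff.mp hy).1
      exact mul_le_mul_of_nonneg_right (hk _ _ (hdnn x₀ y) (hdle y hy')) (hm y).le
    have h2 : k (fdiam d B') * mass m B ≤ k (fdiam d B) * mass m B :=
      mul_le_mul_of_nonneg_right (hk _ _ hDnn hDle) hmBnn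
    linarith
  exact ⟨key, by unfold lamB; linarith⟩
end

section
/- Assume k is nonincreasing and nonnegative on [0,∞), and that Σ_{x ∈ X} m(x) = 1. Then λ(X) = −k(diam X), and for every ball B of X one has λ(B) ≤ −k(diam X); in particular |λ(B)| ≥ k(diam X) for every ball B, with equality for B = X, so the spectral gap of the ultrametric Laplacian (the least absolute value of the eigenvalues λ(B)) equals k(diam X). -/
open scoped Classical
open Finset

/-- If `k` is nonincreasing and nonnegative on `[0,∞)` and `m` is a
probability weight, then `λ(X) = −k(diam X)`, every ball satisfies
`λ(B) ≤ −k(diam X)` and `|λ(B)| ≥ k(diam X)`, with equality for `B = X`: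
the spectral gap equals `k(diam X)`. -/
theorem stmt3 {X : Type*} [Fintype X] [DecidableEq X]
    (hX : 1 < Fintype.card X)
    (d : X → X → ℝ)
    (hd0 : ∀ x y, d x y = 0 ↔ x = y)
    (hsymm : ∀ x y, d x y = d y x)
    (hultra : ∀ x y z, d x z ≤ max (d x y) (d y z))
    (m : X → ℝ) (hm : ∀ x, 0 < m x) (k : ℝ → ℝ)
    (hk : ∀ a b, 0 ≤ a → a ≤ b → k b ≤ k a)
    (hknn : ∀ r, 0 ≤ r → 0 ≤ k r)
    (hprob : ∑ x, m x = 1) :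
    (∀ x₀ : X, lamB d k m Finset.univ x₀ = -k (fdiam d Finset.univ)) ∧
    (∀ B : Finset X, IsBall d B → ∀ x₀ ∈ B,
        lamB d k m B x₀ ≤ -k (fdiam d Finset.univ) ∧
        k (fdiam d Finset.univ) ≤ |lamB d k m B x₀|) ∧
    (∀ x₀ : X, |lamB d k m Finset.univ x₀| = k (fdiam d Finset.univ)) := by
  have hne : Nonempty X := Fintype.card_pos_iff.mp (by omega)
  have hdxx : ∀ x, d x x = 0 := fun x => (hd0 x x).mpr rfl
  have hdnn : ∀ x y, 0 ≤ d x y := by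
    intro x y
    have h := hultra x y x
    rw [hdxx, hsymm y x, max_self] at h
    exact h
  obtain ⟨x⟩ := hne
  have huniv : ((Finset.univ ×ˢ Finset.univ : Finset (X × X))).Nonempty := ⟨(x, x), by simp⟩
  set D := fdiam d (Finset.univ : Finset X) with hD
  have hdle : ∀ a b : X, d a b ≤ D := by
    intro a b
    rw [hD, fdiam, dif_pos huniv]
    exact Finset.le_sup' (f := fun p => d p.1 p.2) (Finset.mk_mem_product (Finset.mem_univ a) (Finset.mem_univ b))
  have hDnn : 0 ≤ D := (hdxx x) ▸ hdle x x
  have hkD : 0 ≤ k D := hknn D hDnn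
  have part1 : ∀ x₀ : X, lamB d k m Finset.univ x₀ = -(k D) := by
    intro x₀
    simp [lamB, mass, hprob, hD]
  refine ⟨part1, ?_, ?_⟩
  · intro B _ x₀ hx₀
    have hBne : ((B ×ˢ B : Finset (X × X))).Nonempty := ⟨(x₀, x₀), by simp [hx₀]⟩
    have hBd0 : 0 ≤ fdiam d B := by
      rw [fdiam, dif_pos hBne]
      exact (hdxx x₀) ▸
        Finset.le_sup' (f := fun p => d p.1 p.2) (by simp [hx₀] : ((x₀, x₀) : X × X) ∈ _)
    have hBdle : fdiam d B ≤ D := by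
      rw [fdiam, dif_pos hBne]
      exact Finset.sup'_le _ _ fun p _ => hdle p.1 p.2
    have hsum : k D * (1 : ℝ) ≤
        (∑ y ∈ Bᶜ, k (d x₀ y) * m y) + k (fdiam d B) * mass m B := by
      calc k D * 1 = k D * mass m Bᶜ + k D * mass m B := by
            rw [← mul_add]
            congr 1
            rw [mass, mass, Finset.sum_compl_add_sum, hprob]
        _ ≤ (∑ y ∈ Bᶜ, k (d x₀ y) * m y) + k (fdiam d B) * mass m B := by
            gcongr ?_ + ?_
            · rw [mass, Finset.mul_sum]
              apply Finset.sum_le_sum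
              intro y _
              exact mul_le_mul_of_nonneg_right (hk _ _ (hdnn x₀ y) (hdle x₀ y)) (hm y).le
            · refine mul_le_mul_of_nonneg_right (hk _ _ hBd0 hBdle) ?_
              exact Finset.sum_nonneg fun z _ => (hm z).le
    rw [mul_one] at hsum
    have hlam : lamB d k m B x₀ ≤ -(k D) := by
      rw [lamB]
      linarith
    exact ⟨hlam, le_trans (le_trans (le_neg_of_le_neg hlam) (le_abs_self _)) (abs_neg _).le⟩
  · intro x₀
    rw [part1 x₀, abs_neg, abs_of_nonneg hkD]
end

section
/- Assume that for every ball B of X with at least two elements and B ⊊ X one has k(diam B) − k(diam B⁺) > 0. For such balls set a(B) = m(B)·(k(diam B) − k(diam B⁺)), and set a(X) = m(X)·k(diam X). Then for every f : X → ℝ and every x ∈ X, Σ_{y ∈ X} k(d(x,y))·(f(y) − f(x))·m(y) = −Σ_B a(B)·( f(x) − (1/m(B))·Σ_{y ∈ B} f(y)·m(y) ), where the sum on the right ranges over all balls B of X that contain x and have at least two elements (including B = X). That is, the ultrametric Laplacian coincides with the hierarchical Laplacian with weights a. -/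
open scoped Classical
open Finset

section Aux
set_option linter.unusedSectionVars false
variable {X : Type*} [Fintype X] [DecidableEq X] (d : X → X → ℝ)

lemma mem_uball {x y : X} {r : ℝ} : y ∈ uball d x r ↔ d x y ≤ r := by
  simp [uball]

variable (hd0 : ∀ x y, d x y = 0 ↔ x = y)
    (hsymm : ∀ x y, d x y = d y x)
    (hultra : ∀ x y z, d x z ≤ max (d x y) (d y z))

include hd0 hsymm hultra in
lemma d_nonneg (x y : X) : 0 ≤ d x y := by
  have h := hultra x y x
  rw [(hd0 x x).mpr rfl] at h
  rw [hsymm y x] at h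
  simpa using h

include hsymm hultra in
lemma uball_recenter {c x : X} {r : ℝ} (hx : x ∈ uball d c r) : uball d c r = uball d x r := by
  rw [mem_uball] at hx
  ext y
  simp only [mem_uball]
  constructor
  · intro h
    calc d x y ≤ max (d x c) (d c y) := hultra x c y
    _ ≤ r := max_le (by rw [hsymm]; exact hx) h
  · intro h
    calc d c y ≤ max (d c x) (d x y) := hultra c x y
    _ ≤ r := max_le hx h

include hsymm hultra in
lemma fdiam_eq_sup {B : Finset X} {x : X} (hx : x ∈ B) :
    fdiam d B = B.sup' ⟨x, hx⟩ (fun y => d x y) := by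
  have hne : (B ×ˢ B).Nonempty := ⟨(x, x), by simp [hx]⟩
  rw [fdiam, dif_pos hne]
  apply le_antisymm
  · apply Finset.sup'_le
    rintro ⟨a, b⟩ hab
    simp only [Finset.mem_product] at hab
    calc d a b ≤ max (d a x) (d x b) := hultra a x b
    _ ≤ B.sup' ⟨x, hx⟩ (fun y => d x y) := by
        apply max_le
        · rw [hsymm]; exact Finset.le_sup' _ hab.1
        · exact Finset.le_sup' _ hab.2
  · apply Finset.sup'_le
    intro y hy
    exact Finset.le_sup' (f := fun p : X × X => d p.1 p.2) (by simp [hx, hy] : (x, y) ∈ B ×ˢ B)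

include hsymm hultra in
lemma ball_eq_uball_fdiam {B : Finset X} (hB : IsBall d B) {x : X} (hx : x ∈ B) :
    B = uball d x (fdiam d B) := by
  obtain ⟨c, r, hr, rfl⟩ := hB
  have he := uball_recenter d hsymm hultra hx
  rw [he] at hx
  rw [he]
  rw [fdiam_eq_sup d hsymm hultra hx]
  ext y
  simp only [mem_uball]
  constructor
  · intro h
    exact Finset.le_sup' (f := fun y => d x y) (mem_uball d |>.mpr h)
  · intro h
    refine h.trans (Finset.sup'_le _ _ fun z hz => ?_)
    exact (mem_uball d).mp hz

include hd0 hsymm hultra in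
lemma fdiam_uball {x : X} {t : ℝ} (ht : ∃ z, d x z = t) :
    fdiam d (uball d x t) = t := by
  obtain ⟨z, rfl⟩ := ht
  have ht0 : (0:ℝ) ≤ d x z := d_nonneg d hd0 hsymm hultra x z
  have hx : x ∈ uball d x (d x z) := by rw [mem_uball, (hd0 x x).mpr rfl]; exact ht0
  rw [fdiam_eq_sup d hsymm hultra hx]
  apply le_antisymm
  · exact Finset.sup'_le _ _ fun y hy => (mem_uball d).mp hy
  · exact Finset.le_sup' (f := fun y => d x y) ((mem_uball d).mpr le_rfl)

end Aux

lemma telescope (k : ℝ → ℝ) (T : Finset ℝ) :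
    ∀ (n : ℕ) (s : ℝ), s ∈ T → (T.filter (s ≤ ·)).card ≤ n →
    ∑ t ∈ T.filter (s ≤ ·),
      (if h : (T.filter (t < ·)).Nonempty then k t - k ((T.filter (t < ·)).min' h) else k t)
      = k s := by
  intro n
  induction n with
  | zero =>
    intro s hs hcard
    rw [Nat.le_zero, Finset.card_eq_zero] at hcard
    have : s ∈ T.filter (s ≤ ·) := Finset.mem_filter.mpr ⟨hs, le_rfl⟩
    rw [hcard] at this
    simp at this
  | succ n ih =>
    intro s hs hcard
    have hsS : s ∈ T.filter (s ≤ ·) := Finset.mem_filter.mpr ⟨hs, le_rfl⟩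
    rw [← Finset.add_sum_erase _ _ hsS]
    by_cases hne : (T.filter (s < ·)).Nonempty
    · set s' := (T.filter (s < ·)).min' hne with hs'def
      have hs'mem : s' ∈ T.filter (s < ·) := Finset.min'_mem _ hne
      rw [Finset.mem_filter] at hs'mem
      have herase : (T.filter (s ≤ ·)).erase s = T.filter (s' ≤ ·) := by
        ext t
        rw [Finset.mem_erase, Finset.mem_filter, Finset.mem_filter]
        constructor
        · rintro ⟨hts, htT, hst⟩
          exact ⟨htT, Finset.min'_le _ _ (Finset.mem_filter.mpr
            ⟨htT, lt_of_le_of_ne hst (Ne.symm hts)⟩)⟩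
        · rintro ⟨htT, hst⟩
          have : s < t := lt_of_lt_of_le hs'mem.2 hst
          exact ⟨ne_of_gt this, htT, le_of_lt this⟩
      have hcard' : (T.filter (s' ≤ ·)).card ≤ n := by
        have := Finset.card_erase_of_mem hsS
        rw [herase] at this
        omega
      rw [herase, ih s' hs'mem.1 hcard', dif_pos hne]
      ring
    · have : (T.filter (s ≤ ·)).erase s = ∅ := by
        rw [Finset.eq_empty_iff_forall_notMem]
        intro t ht
        rw [Finset.mem_erase, Finset.mem_filter] at ht
        exact hne ⟨t, Finset.mem_filter.mpr ⟨ht.2.1, lt_of_le_of_ne ht.2.2 (Ne.symm ht.1)⟩⟩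
      rw [this, Finset.sum_empty, dif_neg hne, add_zero]


/-- Under the strict monotonicity condition
`k(diam B) − k(diam B⁺) > 0` for balls `B ⊊ X` with at least two elements, the
ultrametric Laplacian coincides with the hierarchical Laplacian with weights
`a(B) = m(B)·(k(diam B) − k(diam B⁺))` and `a(X) = m(X)·k(diam X)`. -/
theorem stmt4 {X : Type*} [Fintype X] [DecidableEq X]
    (hX : 1 < Fintype.card X)
    (d : X → X → ℝ)
    (hd0 : ∀ x y, d x y = 0 ↔ x = y)
    (hsymm : ∀ x y, d x y = d y x)
    (hultra : ∀ x y z, d x z ≤ max (d x y) (d y z))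
    (m : X → ℝ) (hm : ∀ x, 0 < m x) (k : ℝ → ℝ)
    (hmono : ∀ B : Finset X, IsBall d B → 1 < B.card → B ≠ Finset.univ →
      ∀ x ∈ B, 0 < k (fdiam d B) - k (fdiam d (parentB d B x))) :
    ∀ (f : X → ℝ) (x : X),
      (∑ y, k (d x y) * (f y - f x) * m y) =
        -∑ B ∈ Finset.univ.filter
            (fun B : Finset X => IsBall d B ∧ x ∈ B ∧ 1 < B.card),
          (if B = Finset.univ then mass m Finset.univ * k (fdiam d Finset.univ)
           else mass m B * (k (fdiam d B) - k (fdiam d (parentB d B x)))) *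
            (f x - (mass m B)⁻¹ * ∑ y ∈ B, f y * m y) := by
  intro f x
  have dnn : ∀ a b : X, 0 ≤ d a b := d_nonneg d hd0 hsymm hultra
  set D : Finset ℝ := Finset.univ.image (d x) with hD
  set T : Finset ℝ := D.filter (0 < ·) with hT
  have hmemD : ∀ t : ℝ, t ∈ D ↔ ∃ z, d x z = t := by
    intro t; simp [hD]
  have hmemT : ∀ t : ℝ, t ∈ T ↔ (∃ z, d x z = t) ∧ 0 < t := by
    intro t; rw [hT, Finset.mem_filter, hmemD]
  -- T is nonempty
  obtain ⟨w, hw⟩ := Fintype.exists_ne_of_one_lt_card hX x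
  have hTne : T.Nonempty := by
    refine ⟨d x w, (hmemT _).mpr ⟨⟨w, rfl⟩, ?_⟩⟩
    exact lt_of_le_of_ne (dnn x w) (fun h => hw (((hd0 x w).mp h.symm).symm))
  -- membership in balls
  have hmemB : ∀ (t : ℝ) (y : X), y ∈ uball d x t ↔ d x y ≤ t := fun t y => mem_uball d
  have hxB : ∀ t ∈ T, x ∈ uball d x t := by
    intro t ht
    rw [hmemB, (hd0 x x).mpr rfl]
    exact le_of_lt ((hmemT t).mp ht).2
  have hfd : ∀ t ∈ T, fdiam d (uball d x t) = t := fun t ht =>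
    fdiam_uball d hd0 hsymm hultra ((hmemT t).mp ht).1
  -- Step 1 : the index set is the image of T
  have hindex : Finset.univ.filter
      (fun B : Finset X => IsBall d B ∧ x ∈ B ∧ 1 < B.card)
      = T.image (fun t => uball d x t) := by
    ext B
    simp only [Finset.mem_filter, Finset.mem_univ, true_and, Finset.mem_image]
    constructor
    · rintro ⟨hB, hxB', hcard⟩
      refine ⟨fdiam d B, ?_, (ball_eq_uball_fdiam d hsymm hultra hB hxB').symm⟩
      rw [hmemT]
      have hsup := fdiam_eq_sup d hsymm hultra hxB'
      obtain ⟨z, hzB, hz⟩ := Finset.exists_mem_eq_sup' (⟨x, hxB'⟩ : B.Nonempty) (fun y => d x y)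
      constructor
      · exact ⟨z, by rw [hsup, hz]⟩
      · obtain ⟨a, haB, b, hbB, hab⟩ := Finset.one_lt_card.mp hcard
        obtain ⟨yy, hyyB, hyyx⟩ : ∃ y ∈ B, y ≠ x := by
          by_cases hax : a = x
          · exact ⟨b, hbB, fun h => hab (by rw [hax, h])⟩
          · exact ⟨a, haB, hax⟩
        have hpos : 0 < d x yy := lt_of_le_of_ne (dnn x yy)
          (fun h => hyyx (((hd0 x yy).mp h.symm).symm))
        refine lt_of_lt_of_le hpos ?_
        rw [hsup]
        exact Finset.le_sup' _ hyyB
    · rintro ⟨t, htT, rfl⟩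
      obtain ⟨⟨z, hz⟩, ht0⟩ := (hmemT t).mp htT
      refine ⟨⟨x, t, le_of_lt ht0, rfl⟩, hxB t htT, ?_⟩
      apply Finset.one_lt_card.mpr
      refine ⟨x, hxB t htT, z, ?_, ?_⟩
      · rw [hmemB]; exact le_of_eq hz
      · intro h
        exact (ne_of_gt ht0) (by rw [← hz, h]; exact (hd0 z z).mpr rfl)
  rw [hindex]
  -- Step 2 : sum over the image
  have hinj : ∀ t ∈ T, ∀ t' ∈ T, uball d x t = uball d x t' → t = t' := by
    intro t ht t' ht' h
    rw [← hfd t ht, ← hfd t' ht', h]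
  rw [Finset.sum_image hinj]
  -- abbreviation for the telescoping coefficient
  set g : ℝ → ℝ := fun t =>
    if h : (T.filter (t < ·)).Nonempty then k t - k ((T.filter (t < ·)).min' h) else k t
    with hg
  have hgdef : ∀ t : ℝ, g t =
      if h : (T.filter (t < ·)).Nonempty then k t - k ((T.filter (t < ·)).min' h) else k t :=
    fun _ => rfl
  -- Step 3 : each summand
  have hstep3 : ∀ t ∈ T,
      (if uball d x t = Finset.univ then mass m Finset.univ * k (fdiam d Finset.univ)
       else mass m (uball d x t) *
        (k (fdiam d (uball d x t)) - k (fdiam d (parentB d (uball d x t) x)))) *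
        (f x - (mass m (uball d x t))⁻¹ * ∑ y ∈ uball d x t, f y * m y)
      = g t * ∑ y ∈ uball d x t, (f x - f y) * m y := by
    intro t ht
    obtain ⟨⟨z, hz⟩, ht0⟩ := (hmemT t).mp ht
    have hmass : 0 < mass m (uball d x t) :=
      Finset.sum_pos (fun y _ => hm y) ⟨x, hxB t ht⟩
    have hcoeff : (if uball d x t = Finset.univ then mass m Finset.univ * k (fdiam d Finset.univ)
       else mass m (uball d x t) *
        (k (fdiam d (uball d x t)) - k (fdiam d (parentB d (uball d x t) x))))
        = mass m (uball d x t) * g t := by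
      by_cases hU : uball d x t = Finset.univ
      · rw [if_pos hU]
        have hempt : ¬ (T.filter (t < ·)).Nonempty := by
          rintro ⟨t', ht'⟩
          rw [Finset.mem_filter, hmemT] at ht'
          obtain ⟨⟨⟨z', hz'⟩, _⟩, htt'⟩ := ht'
          have : z' ∈ uball d x t := hU ▸ Finset.mem_univ z'
          rw [hmemB] at this
          rw [hz'] at this
          exact absurd htt' (not_lt.mpr this)
        have hgt : g t = k t := by rw [hgdef t, dif_neg hempt]
        rw [hgt, ← hU, hfd t ht]
      · rw [if_neg hU]
        -- the complement is nonempty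
        obtain ⟨u, hu⟩ : ∃ u, u ∉ uball d x t := by
          by_contra h
          push_neg at h
          exact hU (Finset.eq_univ_iff_forall.mpr h)
        have hcne : ((uball d x t)ᶜ : Finset X).Nonempty := ⟨u, Finset.mem_compl.mpr hu⟩
        have hfne : (T.filter (t < ·)).Nonempty := by
          refine ⟨d x u, Finset.mem_filter.mpr ⟨(hmemT _).mpr ⟨⟨u, rfl⟩, ?_⟩, ?_⟩⟩
          · exact lt_trans ht0 (lt_of_not_ge (fun h => hu ((hmemB t u).mpr h)))
          · exact lt_of_not_ge (fun h => hu ((hmemB t u).mpr h))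
        have hgt : g t = k t - k ((T.filter (t < ·)).min' hfne) := by
          rw [hgdef t, dif_pos hfne]
        rw [hgt]
        -- identify the parent radius
        have hpr : parentR d (uball d x t) x = (T.filter (t < ·)).min' hfne := by
          rw [parentR, dif_pos hcne]
          apply le_antisymm
          · have hmm := Finset.min'_mem _ hfne
            rw [Finset.mem_filter, hmemT] at hmm
            obtain ⟨⟨⟨z', hz'⟩, _⟩, htm⟩ := hmm
            have : z' ∈ ((uball d x t)ᶜ : Finset X) := by
              rw [Finset.mem_compl, hmemB]
              rw [hz']
              exact not_le.mpr htm
            calc ((uball d x t)ᶜ : Finset X).inf' hcne (fun y => d x y) ≤ d x z' :=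
                  Finset.inf'_le _ this
            _ = _ := hz'
          · obtain ⟨v, hv, hveq⟩ := Finset.exists_mem_eq_inf' hcne (fun y => d x y)
            rw [hveq]
            apply Finset.min'_le
            rw [Finset.mem_filter, hmemT]
            rw [Finset.mem_compl, hmemB] at hv
            exact ⟨⟨⟨v, rfl⟩, lt_trans ht0 (lt_of_not_ge hv)⟩, lt_of_not_ge hv⟩
        have hfdp : fdiam d (parentB d (uball d x t) x) = (T.filter (t < ·)).min' hfne := by
          rw [parentB, hpr]
          apply fdiam_uball d hd0 hsymm hultra
          have hmm := Finset.min'_mem _ hfne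
          rw [Finset.mem_filter, hmemT] at hmm
          exact hmm.1.1
        rw [hfd t ht, hfdp]
    rw [hcoeff]
    have h1 : ∑ y ∈ uball d x t, (f x - f y) * m y
        = f x * mass m (uball d x t) - ∑ y ∈ uball d x t, f y * m y := by
      rw [mass, Finset.mul_sum, ← Finset.sum_sub_distrib]
      exact Finset.sum_congr rfl (fun y _ => by ring)
    rw [h1]
    have hne := ne_of_gt hmass
    field_simp
  rw [Finset.sum_congr rfl hstep3]
  -- Step 4 : swap the sums
  have hswap : ∑ t ∈ T, g t * ∑ y ∈ uball d x t, (f x - f y) * m y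
      = ∑ y, (∑ t ∈ T.filter (fun t => d x y ≤ t), g t) * ((f x - f y) * m y) := by
    have h1 : ∀ t ∈ T, g t * ∑ y ∈ uball d x t, (f x - f y) * m y
        = ∑ y, (if d x y ≤ t then g t * ((f x - f y) * m y) else 0) := by
      intro t _
      rw [Finset.mul_sum]
      exact Finset.sum_filter (fun y => d x y ≤ t) (fun y => g t * ((f x - f y) * m y))
    rw [Finset.sum_congr rfl h1, Finset.sum_comm]
    refine Finset.sum_congr rfl fun y _ => ?_
    rw [Finset.sum_mul]
    exact (Finset.sum_filter (fun t => d x y ≤ t) (fun t => g t * ((f x - f y) * m y))).symm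
  rw [hswap]
  -- Step 5 : telescope
  set s : X → ℝ := fun y => if y = x then T.min' hTne else d x y with hs
  have hsdef : ∀ y, s y = if y = x then T.min' hTne else d x y := fun _ => rfl
  have hsT : ∀ y, s y ∈ T := by
    intro y
    rw [hsdef y]
    by_cases hyx : y = x
    · rw [if_pos hyx]; exact Finset.min'_mem _ hTne
    · rw [if_neg hyx, hmemT]
      exact ⟨⟨y, rfl⟩, lt_of_le_of_ne (dnn x y)
        (fun h => hyx (((hd0 x y).mp h.symm).symm))⟩
  have hfilt : ∀ y, T.filter (fun t => d x y ≤ t) = T.filter (s y ≤ ·) := by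
    intro y
    by_cases hyx : y = x
    · have hsy : s y = T.min' hTne := by rw [hsdef y, if_pos hyx]
      have hdy : d x y = 0 := (hd0 x y).mpr hyx.symm
      ext t
      simp only [Finset.mem_filter, and_congr_right_iff]
      intro htT
      rw [hdy, hsy]
      exact ⟨fun _ => Finset.min'_le _ _ htT, fun _ => le_of_lt ((hmemT t).mp htT).2⟩
    · have hsy : s y = d x y := by rw [hsdef y, if_neg hyx]
      rw [hsy]
  have htel : ∀ y, ∑ t ∈ T.filter (fun t => d x y ≤ t), g t = k (s y) := by
    intro y
    rw [hfilt y]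
    exact telescope k T (T.filter (s y ≤ ·)).card (s y) (hsT y) le_rfl
  have hfinal : ∑ y, (∑ t ∈ T.filter (fun t => d x y ≤ t), g t) * ((f x - f y) * m y)
      = ∑ y, k (s y) * ((f x - f y) * m y) :=
    Finset.sum_congr rfl (fun y _ => by rw [htel y])
  rw [hfinal]
  -- Step 6 : conclusion
  rw [← Finset.sum_neg_distrib]
  refine Finset.sum_congr rfl fun y _ => ?_
  by_cases hyx : y = x
  · have hsy0 : f y - f x = 0 := by rw [hyx, sub_self]
    have hsx0 : f x - f y = 0 := by rw [hyx, sub_self]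
    rw [hsy0, hsx0]; ring
  · have hsy : s y = d x y := by rw [hsdef y, if_neg hyx]
    rw [hsy]; ring
end

section
/- The constant function 1 together with all functions φ_{B,B'} = 1_{B'}/m(B') − 1_B/m(B), taken over all pairs (B, B') in which B is a ball of X with at least two elements and B' is a nonempty ball with B' ⊊ B such that d(x,y) = diam(B) for every x ∈ B' and every y ∈ B \ B', linearly span the space of all functions X → ℝ. -/
open scoped Classical
open Finset

/-- The constant function `1` together with all functions
`φ_{B,B'} = 1_{B'}/m(B') − 1_B/m(B)` (over all balls `B` with at least two elements
and nonempty balls `B' ⊊ B` with `d(x,y) = diam B` for `x ∈ B'`, `y ∈ B \ B'`)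
span the space of all functions `X → ℝ`. -/
theorem stmt6 {X : Type*} [Fintype X] [DecidableEq X]
    (hX : 1 < Fintype.card X)
    (d : X → X → ℝ)
    (hd0 : ∀ x y, d x y = 0 ↔ x = y)
    (hsymm : ∀ x y, d x y = d y x)
    (hultra : ∀ x y z, d x z ≤ max (d x y) (d y z))
    (m : X → ℝ) (hm : ∀ x, 0 < m x) :
    Submodule.span ℝ
      (insert (fun _ => (1 : ℝ))
        {φ : X → ℝ | ∃ B B' : Finset X, IsBall d B ∧ IsBall d B' ∧
          1 < B.card ∧ B'.Nonempty ∧ B' ⊂ B ∧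
          (∀ x ∈ B', ∀ y ∈ B \ B', d x y = fdiam d B) ∧
          φ = fun x => (if x ∈ B' then (mass m B')⁻¹ else 0) -
                (if x ∈ B then (mass m B)⁻¹ else 0)}) = ⊤ := by
  set S : Set (X → ℝ) :=
    (insert (fun _ => (1 : ℝ))
        {φ : X → ℝ | ∃ B B' : Finset X, IsBall d B ∧ IsBall d B' ∧
          1 < B.card ∧ B'.Nonempty ∧ B' ⊂ B ∧
          (∀ x ∈ B', ∀ y ∈ B \ B', d x y = fdiam d B) ∧
          φ = fun x => (if x ∈ B' then (mass m B')⁻¹ else 0) -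
                (if x ∈ B then (mass m B)⁻¹ else 0)}) with hSdef
  have dnn : ∀ x y, 0 ≤ d x y := by
    intro x y
    have h := hultra x y x
    rw [(hd0 x x).mpr rfl, hsymm y x, max_self] at h
    exact h
  have memU : ∀ (c : X) (r : ℝ) (y : X), y ∈ uball d c r ↔ d c y ≤ r := by
    intro c r y; simp [uball]
  have recenter : ∀ (c : X) (r : ℝ) (x : X), x ∈ uball d c r →
      uball d c r = uball d x r := by
    intro c r x hx
    rw [memU] at hx
    ext y
    rw [memU, memU]
    constructor
    · intro h
      refine le_trans (hultra x c y) (max_le ?_ h)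
      rw [hsymm x c]; exact hx
    · intro h
      exact le_trans (hultra c x y) (max_le hx h)
  have massPos : ∀ B : Finset X, B.Nonempty → 0 < mass m B := by
    intro B hB; exact Finset.sum_pos (fun i _ => hm i) hB
  -- main induction: indicators of nonempty balls are in the span
  have key : ∀ n (B : Finset X), Bᶜ.card = n → IsBall d B → B.Nonempty →
      (fun y => if y ∈ B then (1 : ℝ) else 0) ∈ Submodule.span ℝ S := by
    intro n
    induction n using Nat.strong_induction_on with
    | _ n ih =>
      intro B hcard hball hne
      rcases Finset.eq_empty_or_nonempty (Bᶜ) with hc | hc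
      · -- B = univ
        have hBuniv : B = Finset.univ := by
          rwa [Finset.compl_eq_empty_iff] at hc
        have : (fun y => if y ∈ B then (1 : ℝ) else 0) = fun _ => (1 : ℝ) := by
          funext y; simp [hBuniv]
        rw [this]
        exact Submodule.subset_span (by rw [hSdef]; exact Set.mem_insert _ _)
      · obtain ⟨c, r, hr, hBc⟩ := hball
        obtain ⟨x, hx⟩ := hne
        have hBx : B = uball d x r := by
          rw [hBc]; exact recenter c r x (hBc ▸ hx)
        set r' : ℝ := Bᶜ.inf' hc (fun z => d x z) with hr'def
        obtain ⟨z₀, hz₀, hz₀eq⟩ := Finset.exists_mem_eq_inf' hc (fun z => d x z)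
        have hz₀notB : z₀ ∉ B := Finset.mem_compl.mp hz₀
        have hrr' : r < r' := by
          have : ¬ d x z₀ ≤ r := by
            intro h; exact hz₀notB (by rw [hBx, memU]; exact h)
          rw [hr'def, hz₀eq]; linarith [not_le.mp this]
        set Bp : Finset X := uball d x r' with hBpdef
        have hsub : B ⊆ Bp := by
          intro y hy
          rw [hBx, memU] at hy
          rw [hBpdef, memU]
          exact le_trans hy hrr'.le
        have hxBp : x ∈ Bp := by
          rw [hBpdef, memU, (hd0 x x).mpr rfl]
          exact le_trans hr hrr'.le
        have hz₀Bp : z₀ ∈ Bp := by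
          rw [hBpdef, memU, ← hz₀eq]
        have hssub : B ⊂ Bp := ⟨hsub, fun h => hz₀notB (h hz₀Bp)⟩
        have hr'le : ∀ y ∈ Bᶜ, r' ≤ d x y := fun y hy => Finset.inf'_le _ hy
        -- distances from points of B to points of Bp \ B equal r'
        have hdxy : ∀ y ∈ Bp, y ∉ B → d x y = r' := by
          intro y hyBp hyB
          rw [hBpdef, memU] at hyBp
          exact le_antisymm hyBp (hr'le y (Finset.mem_compl.mpr hyB))
        have hdB : ∀ y ∈ B, d x y ≤ r := fun y hy => (memU x r y).mp (hBx ▸ hy)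
        have hday : ∀ a ∈ B, ∀ y ∈ Bp, y ∉ B → d a y = r' := by
          intro a ha y hyBp hyB
          have hxa : d x a ≤ r := hdB a ha
          have hxy : d x y = r' := hdxy y hyBp hyB
          have h1 : d a y ≤ r' := by
            refine le_trans (hultra a x y) (max_le ?_ hxy.le)
            rw [hsymm a x]; exact le_trans hxa hrr'.le
          have h2 : r' ≤ d a y := by
            have h := hultra x a y
            rw [hxy] at h
            rcases le_max_iff.mp h with h' | h'
            · linarith
            · exact h'
          linarith
        -- fdiam of Bp is r'
        have hdiam : fdiam d Bp = r' := by
          have hne2 : (Bp ×ˢ Bp).Nonempty := ⟨(x, x), Finset.mem_product.mpr ⟨hxBp, hxBp⟩⟩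
          rw [fdiam, dif_pos hne2]
          apply le_antisymm
          · apply Finset.sup'_le
            intro p hp
            obtain ⟨hp1, hp2⟩ := Finset.mem_product.mp hp
            rw [hBpdef, memU] at hp1 hp2
            refine le_trans (hultra p.1 x p.2) (max_le ?_ hp2)
            rw [hsymm p.1 x]; exact hp1
          · have : r' = d x z₀ := hz₀eq
            rw [this]
            exact Finset.le_sup' (f := fun p : X × X => d p.1 p.2)
              (b := (x, z₀)) (Finset.mem_product.mpr ⟨hxBp, hz₀Bp⟩)
          -- card of complement decreases
        have hcardlt : Bpᶜ.card < n := by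
          have h1 : B.card < Bp.card := Finset.card_lt_card hssub
          have h2 : Bp.card ≤ Fintype.card X := Finset.card_le_univ _
          have h3 : Bpᶜ.card = Fintype.card X - Bp.card := Finset.card_compl _
          have h4 : Bᶜ.card = Fintype.card X - B.card := Finset.card_compl _
          omega
        have ihBp : (fun y => if y ∈ Bp then (1 : ℝ) else 0) ∈ Submodule.span ℝ S :=
          ih _ hcardlt Bp rfl ⟨x, r', le_trans hr hrr'.le, rfl⟩ ⟨x, hxBp⟩
        -- φ is in S
        have hφ : (fun y => (if y ∈ B then (mass m B)⁻¹ else 0) -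
              (if y ∈ Bp then (mass m Bp)⁻¹ else 0)) ∈ S := by
          rw [hSdef]
          refine Set.mem_insert_iff.mpr (Or.inr ?_)
          refine ⟨Bp, B, ⟨x, r', le_trans hr hrr'.le, rfl⟩, ⟨x, r, hr, hBx⟩, ?_, ⟨x, hx⟩,
            hssub, ?_, rfl⟩
          · refine Finset.one_lt_card.mpr ⟨x, hxBp, z₀, hz₀Bp, ?_⟩
            intro h; exact hz₀notB (h ▸ hx)
          · intro a ha y hy
            obtain ⟨hy1, hy2⟩ := Finset.mem_sdiff.mp hy
            rw [hdiam]
            exact hday a ha y hy1 hy2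
        have hmB : 0 < mass m B := massPos B ⟨x, hx⟩
        have hmBp : 0 < mass m Bp := massPos Bp ⟨x, hxBp⟩
        have heq : (fun y => if y ∈ B then (1 : ℝ) else 0)
            = mass m B • ((fun y => (if y ∈ B then (mass m B)⁻¹ else 0) -
                (if y ∈ Bp then (mass m Bp)⁻¹ else 0)) +
              (mass m Bp)⁻¹ • (fun y => if y ∈ Bp then (1 : ℝ) else 0)) := by
          funext y
          simp only [Pi.smul_apply, Pi.add_apply, smul_eq_mul]
          by_cases hyB : y ∈ B
          · have hyBp : y ∈ Bp := hsub hyB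
            simp only [hyB, hyBp, if_true]
            field_simp
            ring
          · by_cases hyBp : y ∈ Bp <;> simp [hyB, hyBp]
        rw [heq]
        exact Submodule.smul_mem _ _ (Submodule.add_mem _
          (Submodule.subset_span hφ) (Submodule.smul_mem _ _ ihBp))
  -- singletons are balls
  have hsingle : ∀ x : X, (fun y => if y ∈ ({x} : Finset X) then (1 : ℝ) else 0)
      ∈ Submodule.span ℝ S := by
    intro x
    have hball : ({x} : Finset X) = uball d x 0 := by
      ext y
      rw [memU, Finset.mem_singleton]
      constructor
      · intro h; subst h; rw [(hd0 y y).mpr rfl]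
      · intro h
        exact ((hd0 x y).mp (le_antisymm h (dnn x y))).symm
    exact key _ {x} rfl ⟨x, 0, le_refl 0, hball⟩ ⟨x, Finset.mem_singleton_self x⟩
  rw [Submodule.eq_top_iff']
  intro f
  have hf : f = ∑ x : X, f x • (fun y => if y ∈ ({x} : Finset X) then (1 : ℝ) else 0) := by
    funext y
    simp only [Finset.sum_apply, Pi.smul_apply, smul_eq_mul, Finset.mem_singleton,
      mul_ite, mul_one, mul_zero]
    rw [Finset.sum_ite_eq Finset.univ y f]
    simp
  rw [hf]
  exact Submodule.sum_mem _ fun x _ => Submodule.smul_mem _ _ (hsingle x)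
end

section
/- For every t ∈ ℝ and every z ∈ X, Σ_{y ∈ X} m(y)·(exp(tL))_{y,z} = m(z); equivalently, for every u : X → ℝ and every t ∈ ℝ, Σ_{y ∈ X} (exp(tL) u)(y)·m(y) = Σ_{y ∈ X} u(y)·m(y). That is, the weight m is invariant under the semigroup generated by the ultrametric Laplacian. -/
open scoped Classical
open Finset

theorem vecMul_smul_mat {X : Type*} [Fintype X] (m : X → ℝ) (t : ℝ) (L : Matrix X X ℝ) :
    Matrix.vecMul m (t • L) = t • Matrix.vecMul m L := by
  ext j
  simp [Matrix.vecMul, dotProduct, Finset.mul_sum]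
  exact Finset.sum_congr rfl fun i _ => by ring

theorem key_vecMul_exp {X : Type*} [Fintype X] [DecidableEq X]
    (L : Matrix X X ℝ) (m : X → ℝ) (h : Matrix.vecMul m L = 0) (t : ℝ) :
    Matrix.vecMul m (NormedSpace.exp (t • L)) = m := by
  letI : SeminormedRing (Matrix X X ℝ) := Matrix.linftyOpSemiNormedRing
  letI : NormedRing (Matrix X X ℝ) := Matrix.linftyOpNormedRing
  letI : NormedAlgebra ℝ (Matrix X X ℝ) := Matrix.linftyOpNormedAlgebra
  have h1 : Matrix.vecMul m (t • L) = 0 := by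
    rw [vecMul_smul_mat, h, smul_zero]
  have hpow : ∀ n : ℕ, Matrix.vecMul m ((t • L) ^ (n + 1)) = 0 := by
    intro n
    rw [pow_succ', ← Matrix.vecMul_vecMul, h1, Matrix.zero_vecMul]
  let f : Matrix X X ℝ →L[ℝ] (X → ℝ) :=
    LinearMap.toContinuousLinearMap
      { toFun := fun A => Matrix.vecMul m A
        map_add' := fun A B => Matrix.vecMul_add A B m
        map_smul' := fun c A => vecMul_smul_mat m c A }
  have hf : ∀ A, f A = Matrix.vecMul m A := fun _ => rfl
  rw [← hf, NormedSpace.exp_eq_tsum (𝕂 := ℝ),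
    f.map_tsum (NormedSpace.expSeries_summable' (t • L))]
  rw [tsum_eq_single 0 ?_]
  · rw [map_smul, hf]
    simp [Matrix.vecMul_one]
  · intro n hn
    obtain ⟨k, rfl⟩ := Nat.exists_eq_succ_of_ne_zero hn
    rw [map_smul, hf, hpow k, smul_zero]

/-- The weight `m` is invariant under the semigroup generated by the
ultrametric Laplacian: `Σ_y m(y)·(exp(tL))_{y,z} = m(z)` and, equivalently,
`Σ_y (exp(tL)u)(y)·m(y) = Σ_y u(y)·m(y)` for all `u`. -/
theorem stmt13 {X : Type*} [Fintype X] [DecidableEq X]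
    (hX : 1 < Fintype.card X)
    (d : X → X → ℝ)
    (hd0 : ∀ x y, d x y = 0 ↔ x = y)
    (hsymm : ∀ x y, d x y = d y x)
    (hultra : ∀ x y z, d x z ≤ max (d x y) (d y z))
    (m : X → ℝ) (hm : ∀ x, 0 < m x) (k : ℝ → ℝ) :
    (∀ (t : ℝ) (z : X),
        (∑ y, m y * (NormedSpace.exp (t • ultraLap d k m)) y z) = m z) ∧
    (∀ (t : ℝ) (u : X → ℝ),
        (∑ y, (∑ w, (NormedSpace.exp (t • ultraLap d k m)) y w * u w) * m y) =
          ∑ y, u y * m y) := by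
  
  have hvL : Matrix.vecMul m (ultraLap d k m) = 0 := by
    funext z
    have expand : Matrix.vecMul m (ultraLap d k m) z = ∑ y, m y * ultraLap d k m y z := by
      simp [Matrix.vecMul, dotProduct]
    rw [expand]
    rw [← Finset.sum_compl_add_sum ({z} : Finset X)]
    have h1 : ∑ y ∈ ({z}ᶜ : Finset X), m y * ultraLap d k m y z
        = m z * ∑ y ∈ ({z}ᶜ : Finset X), k (d z y) * m y := by
      rw [Finset.mul_sum]
      refine Finset.sum_congr rfl fun y hy => ?_
      have hyz : y ≠ z := by simpa using hy
      have : ultraLap d k m y z = k (d y z) * m z := by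
        simp [ultraLap, hyz.symm]
      rw [this, hsymm]
      ring
    have h2 : ∑ y ∈ ({z} : Finset X), m y * ultraLap d k m y z
        = m z * -(∑ y ∈ ({z}ᶜ : Finset X), k (d z y) * m y) := by
      rw [Finset.sum_singleton]
      simp [ultraLap]
    rw [h1, h2]
    ring_nf
    simp
  constructor
  · intro t z
    have := congrFun (key_vecMul_exp (ultraLap d k m) m hvL t) z
    simpa [Matrix.vecMul, dotProduct] using this
  · intro t u
    have hz : ∀ z, (∑ y, m y * (NormedSpace.exp (t • ultraLap d k m)) y z) = m z := by
      intro z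
      have := congrFun (key_vecMul_exp (ultraLap d k m) m hvL t) z
      simpa [Matrix.vecMul, dotProduct] using this
    calc (∑ y, (∑ w, (NormedSpace.exp (t • ultraLap d k m)) y w * u w) * m y)
        = ∑ y, ∑ w, m y * (NormedSpace.exp (t • ultraLap d k m)) y w * u w := by
          refine Finset.sum_congr rfl fun y _ => ?_
          rw [Finset.sum_mul]
          exact Finset.sum_congr rfl fun w _ => by ring
      _ = ∑ w, (∑ y, m y * (NormedSpace.exp (t • ultraLap d k m)) y w) * u w := by
          rw [Finset.sum_comm]
          exact Finset.sum_congr rfl fun w _ => by rw [Finset.sum_mul]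
      _ = ∑ w, u w * m w := by
          refine Finset.sum_congr rfl fun w _ => ?_
          rw [hz w]; ring
end

section
/- Assume k is nonincreasing on [0,∞) and Σ_{x ∈ X} m(x) = 1. Then for every t ≥ 0 and every u : X → ℝ with Σ_{y ∈ X} u(y)·m(y) = 0, Σ_{x ∈ X} m(x)·((exp(tL)) u)(x)² ≤ e^{−2·t·k(diam X)} · Σ_{x ∈ X} m(x)·u(x)². That is, on mean-zero functions the heat semigroup contracts in L²(X,m) at exponential rate given by the spectral gap k(diam X). -/
open scoped Classical
open Finset

noncomputable def heatV {X : Type*} [Fintype X] [DecidableEq X]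
    (L : Matrix X X ℝ) (u : X → ℝ) (s : ℝ) (x : X) : ℝ :=
  ∑ y, NormedSpace.exp (s • L) x y * u y

lemma expEntry_hasDerivAt {X : Type*} [Fintype X] [DecidableEq X]
    (A : Matrix X X ℝ) (t : ℝ) (x y : X) :
    HasDerivAt (fun s : ℝ => NormedSpace.exp (s • A) x y)
      ((A * NormedSpace.exp (t • A)) x y) t := by
  letI : SeminormedRing (Matrix X X ℝ) := Matrix.linftyOpSemiNormedRing
  letI : NormedRing (Matrix X X ℝ) := Matrix.linftyOpNormedRing
  letI : NormedAlgebra ℝ (Matrix X X ℝ) := Matrix.linftyOpNormedAlgebra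
  have h : HasDerivAt (fun s : ℝ => NormedSpace.exp (s • A)) (A * NormedSpace.exp (t • A)) t :=
    hasDerivAt_exp_smul_const' A t
  have h2 := ((Matrix.entryLinearMap ℝ ℝ x y).toContinuousLinearMap.hasFDerivAt).comp_hasDerivAt t h
  exact h2

lemma heatV_hasDerivAt {X : Type*} [Fintype X] [DecidableEq X]
    (L : Matrix X X ℝ) (u : X → ℝ) (s : ℝ) (x : X) :
    HasDerivAt (fun s => heatV L u s x) (∑ z, L x z * heatV L u s z) s := by
  have h := HasDerivAt.fun_sum (fun y (_ : y ∈ (univ : Finset X)) =>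
    (expEntry_hasDerivAt L s x y).mul_const (u y))
  convert h using 1
  · rfl
  · rfl
  · rfl
  simp only [heatV, Matrix.mul_apply, Finset.sum_mul, Finset.mul_sum]
  rw [Finset.sum_comm]
  exact Finset.sum_congr rfl fun z _ => Finset.sum_congr rfl fun y _ => by ring

lemma heatV_zero {X : Type*} [Fintype X] [DecidableEq X]
    (L : Matrix X X ℝ) (u : X → ℝ) (x : X) : heatV L u 0 x = u x := by
  simp [heatV, Matrix.one_apply]


/-- On mean-zero functions the heat semigroup contracts in
`L²(X,m)` at exponential rate given by the spectral gap `k(diam X)`. -/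
theorem stmt16 {X : Type*} [Fintype X] [DecidableEq X]
    (hX : 1 < Fintype.card X)
    (d : X → X → ℝ)
    (hd0 : ∀ x y, d x y = 0 ↔ x = y)
    (hsymm : ∀ x y, d x y = d y x)
    (hultra : ∀ x y z, d x z ≤ max (d x y) (d y z))
    (m : X → ℝ) (hm : ∀ x, 0 < m x) (k : ℝ → ℝ)
    (hk : ∀ a b, 0 ≤ a → a ≤ b → k b ≤ k a)
    (hprob : ∑ x, m x = 1)
    (t : ℝ) (ht : 0 ≤ t)
    (u : X → ℝ) (hu : ∑ y, u y * m y = 0) :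
    (∑ x, m x * (∑ y, (NormedSpace.exp (t • ultraLap d k m)) x y * u y) ^ 2) ≤
      Real.exp (-2 * t * k (fdiam d Finset.univ)) * ∑ x, m x * u x ^ 2 := by
  set L := ultraLap d k m with hLdef
  set lam := k (fdiam d Finset.univ) with hlamdef
  -- basic metric facts
  have hdnn : ∀ x y, 0 ≤ d x y := by
    intro x y
    have h0 : d x x = 0 := (hd0 x x).mpr rfl
    have h := hultra x y x
    rw [h0, hsymm y x, max_self] at h
    linarith
  have hne : ((univ : Finset X) ×ˢ (univ : Finset X)).Nonempty := by
    have : Nonempty X := Fintype.card_pos_iff.mp (by omega)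
    obtain ⟨x⟩ := this
    exact ⟨(x, x), by simp⟩
  have hdle : ∀ x y, d x y ≤ fdiam d Finset.univ := by
    intro x y
    rw [fdiam, dif_pos hne]
    have hmemxy : ((x, y) : X × X) ∈ (univ : Finset X) ×ˢ (univ : Finset X) :=
      Finset.mem_product.mpr ⟨Finset.mem_univ x, Finset.mem_univ y⟩
    exact Finset.le_sup' (f := fun p => d p.1 p.2) hmemxy
  have hlam : ∀ x y, lam ≤ k (d x y) := fun x y => hk (d x y) _ (hdnn x y) (hdle x y)
  -- Laplacian row formula
  have lapRow : ∀ (w : X → ℝ) (x : X),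
      ∑ y, L x y * w y = ∑ y, k (d x y) * m y * (w y - w x) := by
    intro w x
    rw [← Finset.sum_compl_add_sum {x} (f := fun y => L x y * w y),
        ← Finset.sum_compl_add_sum {x} (f := fun y => k (d x y) * m y * (w y - w x))]
    simp only [Finset.sum_singleton, sub_self, mul_zero, add_zero]
    have h1 : ∀ y ∈ ({x}ᶜ : Finset X), L x y * w y = k (d x y) * m y * w y := by
      intro y hy
      have : ¬ y = x := by simpa using hy
      simp [hLdef, ultraLap, this]
    rw [Finset.sum_congr rfl h1]
    have h2 : L x x = -(∑ z ∈ ({x}ᶜ : Finset X), k (d x z) * m z) := by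
      simp [hLdef, ultraLap]
    rw [h2]
    simp only [mul_sub, Finset.sum_sub_distrib, ← Finset.sum_mul]
    ring
  -- column sums vanish
  have colsum : ∀ z : X, ∑ y, m y * L y z = 0 := by
    intro z
    rw [← Finset.sum_compl_add_sum {z} (f := fun y => m y * L y z)]
    simp only [Finset.sum_singleton]
    have h1 : ∀ y ∈ ({z}ᶜ : Finset X), m y * L y z = m z * (k (d z y) * m y) := by
      intro y hy
      have hyz : ¬ z = y := by
        have : ¬ y = z := by simpa using hy
        exact fun h => this h.symm
      simp only [hLdef, ultraLap, if_neg hyz]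
      rw [hsymm y z]; ring
    rw [Finset.sum_congr rfl h1]
    have h2 : L z z = -(∑ w ∈ ({z}ᶜ : Finset X), k (d z w) * m w) := by
      simp [hLdef, ultraLap]
    rw [h2, ← Finset.mul_sum]
    ring
  -- Dirichlet form bound for mean-zero functions
  have dirichlet : ∀ w : X → ℝ, (∑ y, m y * w y = 0) →
      ∑ x, m x * (w x * ∑ y, L x y * w y) ≤ -lam * ∑ x, m x * w x ^ 2 := by
    intro w hw
    set S := ∑ x, m x * (w x * ∑ y, L x y * w y) with hSdef
    have hS : S = ∑ x, ∑ y, m x * (k (d x y) * m y) * (w x * (w y - w x)) := by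
      rw [hSdef]
      refine Finset.sum_congr rfl fun x _ => ?_
      rw [lapRow, Finset.mul_sum, Finset.mul_sum]
      exact Finset.sum_congr rfl fun y _ => by ring
    have hS' : S = ∑ x, ∑ y, m x * (k (d x y) * m y) * (w y * (w x - w y)) := by
      rw [hS, Finset.sum_comm]
      refine Finset.sum_congr rfl fun x _ => Finset.sum_congr rfl fun y _ => ?_
      rw [hsymm y x]; ring
    have key : S + S = ∑ x, ∑ y, (-(m x * (k (d x y) * m y) * (w x - w y) ^ 2)) := by
      nth_rewrite 1 [hS]
      nth_rewrite 1 [hS']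
      rw [← Finset.sum_add_distrib]
      refine Finset.sum_congr rfl fun x _ => ?_
      rw [← Finset.sum_add_distrib]
      exact Finset.sum_congr rfl fun y _ => by ring
    have hQge : lam * (∑ x, ∑ y, m x * m y * (w x - w y) ^ 2)
        ≤ ∑ x, ∑ y, m x * (k (d x y) * m y) * (w x - w y) ^ 2 := by
      rw [Finset.mul_sum]
      refine Finset.sum_le_sum fun x _ => ?_
      rw [Finset.mul_sum]
      refine Finset.sum_le_sum fun y _ => ?_
      have h1 : 0 ≤ m x * m y * (w x - w y) ^ 2 :=
        mul_nonneg (mul_nonneg (hm x).le (hm y).le) (sq_nonneg _)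
      have h2 := hlam x y
      nlinarith [h1, h2]
    have hident : ∑ x, ∑ y, m x * m y * (w x - w y) ^ 2 = 2 * ∑ x, m x * w x ^ 2 := by
      have hx : ∀ x : X, ∑ y, m x * m y * (w x - w y) ^ 2
          = (m x * w x ^ 2) * (∑ y, m y) - (2 * (m x * w x)) * (∑ y, m y * w y)
            + m x * (∑ y, m y * w y ^ 2) := by
        intro x
        rw [Finset.mul_sum, Finset.mul_sum, Finset.mul_sum, ← Finset.sum_sub_distrib,
          ← Finset.sum_add_distrib]
        exact Finset.sum_congr rfl fun y _ => by ring
      simp only [hx, hprob, hw, mul_one, mul_zero, sub_zero]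
      rw [Finset.sum_add_distrib, ← Finset.sum_mul, hprob, one_mul]
      ring
    have hQ : S + S ≤ -(lam * (2 * ∑ x, m x * w x ^ 2)) := by
      rw [key, ← hident]
      calc ∑ x, ∑ y, (-(m x * (k (d x y) * m y) * (w x - w y) ^ 2))
          = -∑ x, ∑ y, m x * (k (d x y) * m y) * (w x - w y) ^ 2 := by
            simp
        _ ≤ -(lam * ∑ x, ∑ y, m x * m y * (w x - w y) ^ 2) := by linarith [hQge]
    linarith [hQ]
  -- mean is preserved
  have hmean : ∀ s : ℝ, ∑ y, m y * heatV L u s y = 0 := by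
    have hderiv : ∀ s : ℝ, HasDerivAt (fun s => ∑ y, m y * heatV L u s y) 0 s := by
      intro s
      have h := HasDerivAt.fun_sum (fun y (_ : y ∈ (univ : Finset X)) =>
        ((heatV_hasDerivAt L u s y).const_mul (m y)))
      convert h using 1
      · rfl
      · rfl
      symm
      simp only [Finset.mul_sum]
      rw [Finset.sum_comm]
      refine Finset.sum_eq_zero fun z _ => ?_
      have hc := colsum z
      calc ∑ y, m y * (L y z * heatV L u s z)
          = (∑ y, m y * L y z) * heatV L u s z := by
            rw [Finset.sum_mul]
            exact Finset.sum_congr rfl fun y _ => by ring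
        _ = 0 := by rw [hc, zero_mul]
    intro s
    have hconst := is_const_of_deriv_eq_zero
      (fun s => (hderiv s).differentiableAt) (fun s => (hderiv s).deriv) s 0
    rw [hconst]
    have : ∑ y, m y * heatV L u 0 y = ∑ y, u y * m y := by
      refine Finset.sum_congr rfl fun y _ => ?_
      rw [heatV_zero]; ring
    rw [this, hu]
  -- the squared norm and its derivative
  set g : ℝ → ℝ := fun s => ∑ x, m x * heatV L u s x ^ 2 with hgdef
  have hgd : ∀ s : ℝ, HasDerivAt g
      (∑ x, m x * (2 * heatV L u s x * ∑ z, L x z * heatV L u s z)) s := by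
    intro s
    have h := HasDerivAt.fun_sum (fun x (_ : x ∈ (univ : Finset X)) =>
      (((heatV_hasDerivAt L u s x).pow 2).const_mul (m x)))
    convert h using 1
    · rfl
    · rfl
    · rfl
    refine Finset.sum_congr rfl fun x _ => ?_
    push_cast
    ring
  have hgnn : ∀ s : ℝ, 0 ≤ g s := fun s =>
    Finset.sum_nonneg fun x _ => mul_nonneg (hm x).le (sq_nonneg _)
  have hkey : ∀ s : ℝ,
      ∑ x, m x * (2 * heatV L u s x * ∑ z, L x z * heatV L u s z) ≤ -2 * lam * g s := by
    intro s
    have hd2 := dirichlet (heatV L u s) (hmean s)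
    have : ∑ x, m x * (2 * heatV L u s x * ∑ z, L x z * heatV L u s z)
        = 2 * ∑ x, m x * (heatV L u s x * ∑ z, L x z * heatV L u s z) := by
      rw [Finset.mul_sum]
      exact Finset.sum_congr rfl fun x _ => by ring
    rw [this, hgdef]
    nlinarith [hd2]
  -- Gronwall via monotonicity
  set h : ℝ → ℝ := fun s => Real.exp (2 * lam * s) * g s with hhdef
  have hhd : ∀ s : ℝ, HasDerivAt h
      (2 * lam * Real.exp (2 * lam * s) * g s
        + Real.exp (2 * lam * s) * ∑ x, m x * (2 * heatV L u s x * ∑ z, L x z * heatV L u s z)) s := by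
    intro s
    have he : HasDerivAt (fun s : ℝ => Real.exp (2 * lam * s))
        (2 * lam * Real.exp (2 * lam * s)) s := by
      have := ((hasDerivAt_id s).const_mul (2 * lam)).exp
      simpa [mul_comm] using this
    have := he.fun_mul (hgd s)
    simpa [hhdef] using this
  have hder_nonpos : ∀ s : ℝ, deriv h s ≤ 0 := by
    intro s
    rw [(hhd s).deriv]
    have h1 := hkey s
    have h2 : (0 : ℝ) < Real.exp (2 * lam * s) := Real.exp_pos _
    nlinarith [h1, h2]
  have hanti : Antitone h :=
    antitone_of_deriv_nonpos (fun s => (hhd s).differentiableAt) hder_nonpos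
  have hht := hanti ht
  have hh0 : h 0 = ∑ x, m x * u x ^ 2 := by
    rw [hhdef]
    simp only [mul_zero, Real.exp_zero, one_mul, hgdef]
    exact Finset.sum_congr rfl fun x _ => by rw [heatV_zero]
  -- conclude
  have hfin : g t ≤ Real.exp (-2 * t * lam) * ∑ x, m x * u x ^ 2 := by
    have h1 : Real.exp (2 * lam * t) * g t ≤ ∑ x, m x * u x ^ 2 := by
      have := hht
      rw [hh0] at this
      exact this
    have h2 : g t = Real.exp (-2 * t * lam) * (Real.exp (2 * lam * t) * g t) := by
      rw [← mul_assoc, ← Real.exp_add,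
        show -2 * t * lam + 2 * lam * t = 0 by ring, Real.exp_zero, one_mul]
    rw [h2]
    exact mul_le_mul_of_nonneg_left h1 (Real.exp_nonneg _)
  exact hfin
end

section
/- Assume k is nonincreasing on [0,∞), k(diam X) > 0, and Σ_{x ∈ X} m(x) = 1. Then for every u : X → ℝ and every x ∈ X, (exp(tL) u)(x) tends to Σ_{y ∈ X} u(y)·m(y) as t → ∞; in particular, (exp(tL))_{x,y} tends to m(y) as t → ∞ for all x, y ∈ X. -/
open scoped Classical
open Finset

open NormedSpace in
theorem myExp_mul_eig {n : Type*} [Fintype n] [DecidableEq n]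
    (B C : Matrix n n ℝ) (lam : ℝ) (h : B * C = lam • C) :
    NormedSpace.exp B * C = Real.exp lam • C := by
  letI : SeminormedRing (Matrix n n ℝ) := Matrix.linftyOpSemiNormedRing
  letI : NormedRing (Matrix n n ℝ) := Matrix.linftyOpNormedRing
  letI : NormedAlgebra ℝ (Matrix n n ℝ) := Matrix.linftyOpNormedAlgebra
  have hpow : ∀ p : ℕ, B ^ p * C = lam ^ p • C := by
    intro p; induction p with
    | zero => simp
    | succ q ih =>
        rw [pow_succ, pow_succ, mul_assoc, h, mul_smul_comm, ih, smul_smul, mul_comm]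
  have hsum : Summable fun p : ℕ => ((Nat.factorial p : ℝ)⁻¹) • B ^ p :=
    expSeries_summable' (𝕂 := ℝ) B
  rw [exp_eq_tsum ℝ, ← hsum.tsum_mul_right C]
  have key : ∀ p : ℕ, ((Nat.factorial p : ℝ)⁻¹ • B ^ p) * C
      = (lam ^ p / (Nat.factorial p : ℝ)) • C := by
    intro p
    rw [smul_mul_assoc, hpow, smul_smul, div_eq_inv_mul]
  simp_rw [key]
  rw [(Real.summable_pow_div_factorial lam).tsum_smul_const, Real.exp_eq_exp_ℝ, exp_eq_tsum_div]

open NormedSpace in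
theorem myExp_entry_nonneg {n : Type*} [Fintype n] [DecidableEq n]
    (N : Matrix n n ℝ) (h : ∀ i j, 0 ≤ N i j) (i j : n) :
    0 ≤ NormedSpace.exp N i j := by
  letI : SeminormedRing (Matrix n n ℝ) := Matrix.linftyOpSemiNormedRing
  letI : NormedRing (Matrix n n ℝ) := Matrix.linftyOpNormedRing
  letI : NormedAlgebra ℝ (Matrix n n ℝ) := Matrix.linftyOpNormedAlgebra
  have hpow : ∀ p : ℕ, ∀ a b, 0 ≤ (N ^ p) a b := by
    intro p; induction p with
    | zero => intro a b; by_cases hab : a = b <;> simp [pow_zero, Matrix.one_apply, hab]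
    | succ q ih =>
        intro a b
        rw [pow_succ, Matrix.mul_apply]
        exact Finset.sum_nonneg fun z _ => mul_nonneg (ih a z) (h z b)
  have hsum : Summable fun p : ℕ => ((Nat.factorial p : ℝ)⁻¹) • N ^ p :=
    expSeries_summable' (𝕂 := ℝ) N
  have h2 : NormedSpace.exp N i j = ∑' p : ℕ, (((Nat.factorial p : ℝ)⁻¹) • N ^ p) i j := by
    rw [exp_eq_tsum ℝ]
    show (∑' p : ℕ, ((Nat.factorial p : ℝ)⁻¹) • N ^ p) i j = _
    exact (congrFun (tsum_apply hsum) j).trans (tsum_apply ((Pi.summable).mp hsum i))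
  rw [h2]
  refine tsum_nonneg fun p => ?_
  have : (((Nat.factorial p : ℝ)⁻¹) • N ^ p) i j
      = ((Nat.factorial p : ℝ)⁻¹) * (N ^ p) i j := rfl
  rw [this]
  exact mul_nonneg (by positivity) (hpow p i j)

/-- Ergodicity: if `k` is nonincreasing on `[0,∞)`,
`k(diam X) > 0` and `m` is a probability weight, then `(exp(tL)u)(x) → Σ_y u(y)·m(y)`
as `t → ∞`; in particular `(exp(tL))_{x,y} → m(y)`. -/
theorem stmt17 {X : Type*} [Fintype X] [DecidableEq X]
    (hX : 1 < Fintype.card X)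
    (d : X → X → ℝ)
    (hd0 : ∀ x y, d x y = 0 ↔ x = y)
    (hsymm : ∀ x y, d x y = d y x)
    (hultra : ∀ x y z, d x z ≤ max (d x y) (d y z))
    (m : X → ℝ) (hm : ∀ x, 0 < m x) (k : ℝ → ℝ)
    (hk : ∀ a b, 0 ≤ a → a ≤ b → k b ≤ k a)
    (hgap : 0 < k (fdiam d Finset.univ))
    (hprob : ∑ x, m x = 1) :
    (∀ (u : X → ℝ) (x : X),
        Filter.Tendsto
          (fun t : ℝ => ∑ y, (NormedSpace.exp (t • ultraLap d k m)) x y * u y)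
          Filter.atTop (nhds (∑ y, u y * m y))) ∧
    (∀ x y : X,
        Filter.Tendsto
          (fun t : ℝ => (NormedSpace.exp (t • ultraLap d k m)) x y)
          Filter.atTop (nhds (m y))) := by
  classical
  haveI : Nonempty X := Fintype.card_pos_iff.mp (by omega)
  set L := ultraLap d k m with hLdef
  set c := k (fdiam d Finset.univ) with hcdef
  set P : Matrix X X ℝ := fun _ y => m y with hPdef
  set A : Matrix X X ℝ := P - 1 with hAdef
  set M : Matrix X X ℝ := L - c • A with hMdef
  have hcpos : 0 < c := by rw [hcdef]; exact hgap
  have hd_nonneg : ∀ x y, 0 ≤ d x y := by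
    intro x y
    have h0 : d x x = 0 := (hd0 x x).mpr rfl
    have h := hultra x y x
    rw [h0, hsymm y x] at h
    simpa using h
  have hne : ((Finset.univ ×ˢ Finset.univ) : Finset (X × X)).Nonempty :=
    ⟨(Classical.arbitrary X, Classical.arbitrary X), by simp⟩
  have hfd : ∀ x y, d x y ≤ fdiam d Finset.univ := by
    intro x y
    rw [fdiam, dif_pos hne]
    exact Finset.le_sup' (f := fun p : X × X => d p.1 p.2) (by simp : (x, y) ∈ _)
  have hkc : ∀ x y, c ≤ k (d x y) := by
    intro x y; rw [hcdef]; exact hk _ _ (hd_nonneg x y) (hfd x y)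
  have hLoff : ∀ x y, y ≠ x → L x y = k (d x y) * m y := by
    intro x y hxy; simp [hLdef, ultraLap, hxy]
  have hLdiag : ∀ x, L x x = -(∑ z ∈ ({x}ᶜ : Finset X), k (d x z) * m z) := by
    intro x; simp [hLdef, ultraLap]
  have hLrow : ∀ x, ∑ y, L x y = 0 := by
    intro x
    rw [← Finset.sum_compl_add_sum ({x} : Finset X)]
    have h1 : ∑ y ∈ ({x}ᶜ : Finset X), L x y = ∑ y ∈ ({x}ᶜ : Finset X), k (d x y) * m y :=
      Finset.sum_congr rfl fun y hy => hLoff x y (by simpa using hy)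
    rw [h1, Finset.sum_singleton, hLdiag]
    ring
  have hOneRow : ∀ x : X, ∑ y, (1 : Matrix X X ℝ) x y = 1 := by
    intro x; simp [Matrix.one_apply]
  have hArow : ∀ x, ∑ y, A x y = 0 := by
    intro x
    have h1 : ∀ y, A x y = m y - (1 : Matrix X X ℝ) x y := fun y => rfl
    rw [Finset.sum_congr rfl fun y _ => h1 y, Finset.sum_sub_distrib, hOneRow, hprob, sub_self]
  have hMrow : ∀ x, ∑ y, M x y = 0 := by
    intro x
    have h1 : ∀ y, M x y = L x y - c * A x y := fun y => rfl
    rw [Finset.sum_congr rfl fun y _ => h1 y, Finset.sum_sub_distrib, hLrow, ← Finset.mul_sum,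
      hArow, mul_zero, sub_self]
  have hLP : L * P = 0 := by
    ext x y
    rw [Matrix.mul_apply]
    have h1 : ∀ z, L x z * P z y = L x z * m y := fun z => rfl
    rw [Finset.sum_congr rfl fun z _ => h1 z, ← Finset.sum_mul, hLrow, zero_mul]
    rfl
  have hPL : P * L = 0 := by
    ext x y
    rw [Matrix.mul_apply]
    rw [← Finset.sum_compl_add_sum ({y} : Finset X)]
    have h1 : ∑ z ∈ ({y}ᶜ : Finset X), P x z * L z y
        = (∑ z ∈ ({y}ᶜ : Finset X), k (d y z) * m z) * m y := by
      rw [Finset.sum_mul]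
      refine Finset.sum_congr rfl fun z hz => ?_
      have hzy : z ≠ y := by simpa using hz
      rw [show P x z = m z from rfl, hLoff z y (Ne.symm hzy), hsymm z y]
      ring
    rw [h1, Finset.sum_singleton, show P x y = m y from rfl, hLdiag y,
      show (0 : Matrix X X ℝ) x y = 0 from rfl]
    ring
  have hPP : P * P = P := by
    ext x y
    rw [Matrix.mul_apply]
    show ∑ z, m z * m y = m y
    rw [← Finset.sum_mul, hprob, one_mul]
  have hAP : A * P = 0 := by rw [hAdef, Matrix.sub_mul, hPP, Matrix.one_mul, sub_self]
  have hPA : P * A = 0 := by rw [hAdef, Matrix.mul_sub, hPP, Matrix.mul_one, sub_self]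
  have hAA : A * A = -A := by
    have h1 : (P - 1) * (P - 1) = P * P - P - P + 1 := by noncomm_ring
    rw [hAdef, h1, hPP]
    noncomm_ring
  have hLA : L * A = -L := by rw [hAdef, Matrix.mul_sub, hLP, Matrix.mul_one, zero_sub]
  have hAL : A * L = -L := by rw [hAdef, Matrix.sub_mul, hPL, Matrix.one_mul, zero_sub]
  have hMP : M * P = 0 := by
    rw [hMdef, Matrix.sub_mul, hLP, Matrix.smul_mul, hAP, smul_zero, sub_self]
  have hMA : M * A = -M := by
    rw [hMdef, Matrix.sub_mul, hLA, Matrix.smul_mul, hAA]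
    rw [smul_neg, sub_neg_eq_add]
    abel
  have hAM : A * M = -M := by
    rw [hMdef, Matrix.mul_sub, hAL, Matrix.mul_smul, hAA]
    rw [smul_neg, sub_neg_eq_add]
    abel
  have hcommMA : Commute M A := hMA.trans hAM.symm
  have hexpP : ∀ B : Matrix X X ℝ, B * P = 0 → NormedSpace.exp B * P = P := by
    intro B hB
    have h := myExp_mul_eig B P 0 (by rw [hB, zero_smul])
    rw [Real.exp_zero, one_smul] at h
    exact h
  have key : ∀ t : ℝ, NormedSpace.exp (t • L)
      = P + Real.exp (-(t * c)) • (NormedSpace.exp (t • M) - P) := by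
    intro t
    have hsplit : t • L = t • M + (t * c) • A := by
      rw [hMdef, smul_sub, smul_smul, sub_add_cancel]
    have hcomm2 : Commute (t • M) ((t * c) • A) := (hcommMA.smul_left t).smul_right (t * c)
    rw [hsplit, Matrix.exp_add_of_commute _ _ hcomm2]
    have h1 : NormedSpace.exp ((t * c) • A) * (1 - P) = Real.exp (-(t * c)) • (1 - P) := by
      apply myExp_mul_eig
      have hA1P : A * (1 - P) = -(1 - P) := by
        rw [Matrix.mul_sub, Matrix.mul_one, hAP, sub_zero, hAdef]
        abel
      rw [Matrix.smul_mul, hA1P, smul_neg, ← neg_smul]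
    have h2 : NormedSpace.exp ((t * c) • A) * P = P :=
      hexpP _ (by rw [Matrix.smul_mul, hAP, smul_zero])
    have h3 : NormedSpace.exp (t • M) * P = P :=
      hexpP _ (by rw [Matrix.smul_mul, hMP, smul_zero])
    calc NormedSpace.exp (t • M) * NormedSpace.exp ((t * c) • A)
        = NormedSpace.exp (t • M)
            * (NormedSpace.exp ((t * c) • A) * P + NormedSpace.exp ((t * c) • A) * (1 - P)) := by
          rw [← Matrix.mul_add, add_sub_cancel, Matrix.mul_one]
      _ = NormedSpace.exp (t • M) * (P + Real.exp (-(t * c)) • (1 - P)) := by rw [h2, h1]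
      _ = P + Real.exp (-(t * c)) • (NormedSpace.exp (t • M) - P) := by
          rw [Matrix.mul_add, h3, Matrix.mul_smul, Matrix.mul_sub, Matrix.mul_one, h3]
  have hMoff : ∀ x y, y ≠ x → M x y = (k (d x y) - c) * m y := by
    intro x y hxy
    have h1 : (1 : Matrix X X ℝ) x y = 0 := Matrix.one_apply_ne (Ne.symm hxy)
    have h2 : M x y = L x y - c * (m y - (1 : Matrix X X ℝ) x y) := rfl
    rw [h2, h1, hLoff x y hxy]
    ring
  have huniv_ne : (Finset.univ : Finset X).Nonempty := Finset.univ_nonempty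
  set a : ℝ := max 0 (Finset.univ.sup' huniv_ne fun x => -(M x x)) with hadef
  have haM : ∀ x, 0 ≤ M x x + a := by
    intro x
    have h1 : -(M x x) ≤ a :=
      le_max_of_le_right (Finset.le_sup' (f := fun x => -(M x x)) (Finset.mem_univ x))
    linarith
  have hNent : ∀ t : ℝ, 0 ≤ t → ∀ x y, 0 ≤ (t • (M + a • 1)) x y := by
    intro t ht x y
    have h1 : (t • (M + a • 1)) x y = t * (M x y + a * (1 : Matrix X X ℝ) x y) := rfl
    rw [h1]
    apply mul_nonneg ht
    by_cases hxy : y = x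
    · subst hxy
      rw [Matrix.one_apply_eq, mul_one]
      exact haM y
    · rw [Matrix.one_apply_ne (Ne.symm hxy), mul_zero, add_zero, hMoff x y hxy]
      exact mul_nonneg (by have := hkc x y; linarith) (hm y).le
  have hexpM_nonneg : ∀ t : ℝ, 0 ≤ t → ∀ x y, 0 ≤ NormedSpace.exp (t • M) x y := by
    intro t ht x y
    have hsplit : t • M = (-(t * a)) • (1 : Matrix X X ℝ) + t • (M + a • 1) := by
      rw [smul_add, smul_smul, neg_smul]
      abel
    have hcomm3 : Commute ((-(t * a)) • (1 : Matrix X X ℝ)) (t • (M + a • 1)) :=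
      ((Commute.one_left _).smul_left _).smul_right _
    rw [hsplit, Matrix.exp_add_of_commute _ _ hcomm3]
    have hE1 : NormedSpace.exp ((-(t * a)) • (1 : Matrix X X ℝ))
        = Real.exp (-(t * a)) • 1 := by
      have h := myExp_mul_eig ((-(t * a)) • (1 : Matrix X X ℝ)) 1 (-(t * a))
        (by rw [Matrix.mul_one])
      rw [Matrix.mul_one] at h
      exact h
    rw [hE1]
    have h4 : (Real.exp (-(t * a)) • (1 : Matrix X X ℝ)
          * NormedSpace.exp (t • (M + a • 1))) x y
        = Real.exp (-(t * a)) * NormedSpace.exp (t • (M + a • 1)) x y := by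
      rw [Matrix.smul_mul, Matrix.one_mul]
      rfl
    rw [h4]
    exact mul_nonneg (Real.exp_nonneg _) (myExp_entry_nonneg _ (hNent t ht) x y)
  have hrowE : ∀ t : ℝ, ∀ x, ∑ z, NormedSpace.exp (t • M) x z = 1 := by
    intro t x
    set J : Matrix X X ℝ := fun _ _ => 1 with hJdef
    have hMJ : (t • M) * J = (0 : ℝ) • J := by
      ext p q
      rw [Matrix.mul_apply]
      have h1 : ∀ z, (t • M) p z * J z q = t * M p z := fun z => by
        rw [show J z q = 1 from rfl, mul_one]; rfl
      rw [Finset.sum_congr rfl fun z _ => h1 z, ← Finset.mul_sum, hMrow, mul_zero]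
      rw [show ((0 : ℝ) • J) p q = 0 from by rw [zero_smul]; rfl]
    have h := myExp_mul_eig _ J 0 hMJ
    rw [Real.exp_zero, one_smul] at h
    have h2 := congrFun (congrFun h x) x
    rw [Matrix.mul_apply] at h2
    have h3 : ∀ z, NormedSpace.exp (t • M) x z * J z x = NormedSpace.exp (t • M) x z :=
      fun z => by rw [show J z x = 1 from rfl, mul_one]
    rw [Finset.sum_congr rfl fun z _ => h3 z] at h2
    rw [h2]
  have hEb : ∀ t : ℝ, 0 ≤ t → ∀ x y, NormedSpace.exp (t • M) x y ≤ 1 := by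
    intro t ht x y
    have h := Finset.single_le_sum (f := fun z => NormedSpace.exp (t • M) x z)
      (fun z _ => hexpM_nonneg t ht x z) (Finset.mem_univ y)
    rw [hrowE t x] at h
    exact h
  have part2 : ∀ x y : X,
      Filter.Tendsto (fun t : ℝ => NormedSpace.exp (t • L) x y) Filter.atTop (nhds (m y)) := by
    intro x y
    have heq : ∀ t : ℝ, NormedSpace.exp (t • L) x y
        = m y + Real.exp (-(t * c)) * (NormedSpace.exp (t • M) x y - m y) := by
      intro t
      rw [key t]
      rfl
    have hz : Filter.Tendsto
        (fun t : ℝ => Real.exp (-(t * c)) * (NormedSpace.exp (t • M) x y - m y))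
        Filter.atTop (nhds 0) := by
      have hg : Filter.Tendsto (fun t : ℝ => (1 + m y) * Real.exp (-(t * c)))
          Filter.atTop (nhds 0) := by
        have h1 : Filter.Tendsto (fun t : ℝ => t * c) Filter.atTop Filter.atTop :=
          Filter.Tendsto.atTop_mul_const hcpos Filter.tendsto_id
        have h2 : Filter.Tendsto (fun t : ℝ => Real.exp (-(t * c))) Filter.atTop (nhds 0) :=
          Real.tendsto_exp_neg_atTop_nhds_zero.comp h1
        have h3 := h2.const_mul (1 + m y)
        rw [mul_zero] at h3
        exact h3
      refine squeeze_zero_norm' ?_ hg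
      filter_upwards [Filter.eventually_ge_atTop (0 : ℝ)] with t ht
      rw [Real.norm_eq_abs, abs_mul, Real.abs_exp]
      have hb : |NormedSpace.exp (t • M) x y - m y| ≤ 1 + m y := by
        rw [abs_le]
        constructor
        · have h5 := hexpM_nonneg t ht x y
          linarith
        · have h5 := hEb t ht x y
          have h6 := (hm y).le
          linarith
      calc Real.exp (-(t * c)) * |NormedSpace.exp (t • M) x y - m y|
          ≤ Real.exp (-(t * c)) * (1 + m y) :=
            mul_le_mul_of_nonneg_left hb (Real.exp_nonneg _)
        _ = (1 + m y) * Real.exp (-(t * c)) := mul_comm _ _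
    have h7 : Filter.Tendsto
        (fun t : ℝ => m y + Real.exp (-(t * c)) * (NormedSpace.exp (t • M) x y - m y))
        Filter.atTop (nhds (m y + 0)) := Filter.Tendsto.const_add _ hz
    rw [add_zero] at h7
    exact h7.congr fun t => (heq t).symm
  refine ⟨?_, part2⟩
  intro u x
  have h := tendsto_finset_sum Finset.univ fun y (_ : y ∈ Finset.univ) => (part2 x y).mul_const (u y)
  have h8 : ∑ y, m y * u y = ∑ y, u y * m y := Finset.sum_congr rfl fun y _ => mul_comm _ _
  rw [h8] at h
  exact h
end
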